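/- Let β > 0 and let μ_0 = N(m_0, Σ_0), μ_1 = N(m_1, Σ_1) be Gaussian measures on ℝ^d with positive definite covariances satisfying Σ_0^{-1} ⪯ βI and Σ_1^{-1} ⪯ βI. Then KL(μ_0 ‖ μ_1) ≤ β W2²(μ_0, μ_1), where KL(μ_0 ‖ μ_1) = (1/2)(tr(Σ_1^{-1} Σ_0) − d + ⟨m_1 − m_0, Σ_1^{-1}(m_1 − m_0)⟩ + log(det Σ_1 / det Σ_0)) is the Kullback–Leibler divergence between the two Gaussians. -/

import Mathlib

open MeasureTheory Matrix Real Filter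
open scoped RealInnerProductSpace ENNReal NNReal

noncomputable section

abbrev E (d : ℕ) := EuclideanSpace ℝ (Fin d)
abbrev Mat (d : ℕ) := Matrix (Fin d) (Fin d) ℝ

variable {d : ℕ}

/-- Principal positive semidefinite square root of a matrix (junk value `0` if the
matrix is not positive semidefinite). -/
def msqrt (A : Mat d) : Mat d := by
  classical exact if h : A.PosSemidef then
    (h.1.eigenvectorUnitary : Mat d) * diagonal ((↑) ∘ (Real.sqrt ∘ h.1.eigenvalues)) *
      (star h.1.eigenvectorUnitary : Mat d) else 0

/-- Loewner order `A ⪯ B`, i.e. `B - A` is positive semidefinite. -/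
def Loewner (A B : Mat d) : Prop := (B - A).PosSemidef

/-- The `ℓ² → ℓ²` operator norm of a matrix. -/
def opNorm (A : Mat d) : ℝ := ‖Matrix.toEuclideanCLM (𝕜 := ℝ) A‖

/-- Largest eigenvalue of a (Hermitian) matrix; junk value `0` otherwise. -/
def lamMax (A : Mat d) : ℝ := by
  classical exact if h : A.IsHermitian then ⨆ i, h.eigenvalues i else 0

/-- Density of the Gaussian `N(m, S)` with respect to Lebesgue measure. -/
def gaussPdf (m : E d) (S : Mat d) (x : E d) : ℝ :=
  (Real.sqrt ((2 * Real.pi) ^ d * S.det))⁻¹ *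
    Real.exp (-(1 / 2 : ℝ) * ⟪x - m, (S⁻¹).toEuclideanLin (x - m)⟫)

/-- The Gaussian measure `N(m, S)` on `ℝ^d`. -/
def gaussian (m : E d) (S : Mat d) : Measure (E d) :=
  (volume : Measure (E d)).withDensity fun x => ENNReal.ofReal (gaussPdf m S x)

/-- Hessian matrix of `V : ℝ^d → ℝ` at `x`. -/
def hess (V : E d → ℝ) (x : E d) : Mat d := fun i j =>
  fderiv ℝ (fun y => fderiv ℝ V y (EuclideanSpace.single j 1)) x (EuclideanSpace.single i 1)

/-- `∫ ∇V dN(m,S)`. -/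
def meanGrad (V : E d → ℝ) (m : E d) (S : Mat d) : E d :=
  ∫ x, gradient V x ∂ gaussian m S

/-- `∫ ∇²V dN(m,S)`. -/
def meanHess (V : E d → ℝ) (m : E d) (S : Mat d) : Mat d := fun i j =>
  ∫ x, hess V x i j ∂ gaussian m S

/-- Negative entropy `H(N(m,S)) = ∫ log(N(m,S)) dN(m,S) = -(1/2) log((2πe)^d det S)`. -/
def negEnt (S : Mat d) : ℝ := -(1 / 2 : ℝ) * Real.log ((2 * Real.pi * Real.exp 1) ^ d * S.det)

/-- Squared `2`-Wasserstein distance between the Gaussians `N(m₀,S₀)` and `N(m₁,S₁)`. -/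
def W2sq (m0 m1 : E d) (S0 S1 : Mat d) : ℝ :=
  ‖m0 - m1‖ ^ 2 + (S0 + S1 - (2 : ℝ) • msqrt (msqrt S0 * S1 * msqrt S0)).trace

/-- The objective `F(N(m,S)) = ∫ V dN(m,S) + H(N(m,S))`. -/
def Fobj (V : E d → ℝ) (m : E d) (S : Mat d) : ℝ :=
  (∫ x, V x ∂ gaussian m S) + negEnt S

/-- Optimal transport map from `N(m₀,S₀)` to `N(m₁,S₁)`. -/
def otMap (m0 m1 : E d) (S0 S1 : Mat d) (x : E d) : E d :=
  m1 + ((msqrt S0)⁻¹ * msqrt (msqrt S0 * S1 * msqrt S0) * (msqrt S0)⁻¹).toEuclideanLin (x - m0)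

/-- One step of FB–GVI on the (mean, covariance) pair. -/
def fbStep (V : E d → ℝ) (η : ℝ) (p : E d × Mat d) : E d × Mat d :=
  let Sh := (1 - η • meanHess V p.1 p.2) * p.2 * (1 - η • meanHess V p.1 p.2)
  (p.1 - η • meanGrad V p.1 p.2,
    (1 / 2 : ℝ) • (Sh + (2 * η) • (1 : Mat d) + msqrt (Sh * (Sh + (4 * η) • 1))))

/-- The FB–GVI iterates. -/
def fbgvi (V : E d → ℝ) (η : ℝ) (p0 : E d × Mat d) : ℕ → E d × Mat d
  | 0 => p0
  | k + 1 => fbStep V η (fbgvi V η p0 k)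

/-- One step of Stochastic FB–GVI with sample `x`. -/
def sfbStep (V : E d → ℝ) (η : ℝ) (p : E d × Mat d) (x : E d) : E d × Mat d :=
  let Sh := (1 - η • hess V x) * p.2 * (1 - η • hess V x)
  (p.1 - η • gradient V x,
    (1 / 2 : ℝ) • (Sh + (2 * η) • (1 : Mat d) + msqrt (Sh * (Sh + (4 * η) • 1))))

/-- The Stochastic FB–GVI iterates driven by the samples `X`. -/
def sfbgvi {Ω : Type*} (V : E d → ℝ) (η : ℝ) (p0 : E d × Mat d) (X : ℕ → Ω → E d) :
    ℕ → Ω → E d × Mat d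
  | 0 => fun _ => p0
  | k + 1 => fun ω => sfbStep V η (sfbgvi V η p0 X k ω) (X k ω)

/-- The σ-algebra generated by `X 0, …, X (k-1)`. -/
def natFilt {Ω : Type*} [MeasurableSpace Ω] (X : ℕ → Ω → E d) (k : ℕ) : MeasurableSpace Ω :=
  ⨆ i ∈ Finset.range k, MeasurableSpace.comap (X i) inferInstance



section AuxProof

/-- Auxiliary function for the scalar inequality used in the spectral bound. -/
def hfun (a : ℝ) : ℝ := (a - 1)^2 + 2*(a⁻¹ - 1)^2 - 6*(a⁻¹ - 1 + Real.log a)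

lemma hfun_hasDerivAt {x : ℝ} (hx : 0 < x) :
    HasDerivAt hfun (2*(x-1)^3*(x+2)/x^3) x := by
  have h1 : HasDerivAt (fun a : ℝ => (a - 1)^2) (2*(x-1)) x := by
    simpa using ((hasDerivAt_id x).sub_const 1).fun_pow 2
  have h2 : HasDerivAt (fun a : ℝ => 2*(a⁻¹ - 1)^2) (2*(2*(x⁻¹-1)*(-(x^2)⁻¹))) x := by
    have := (((hasDerivAt_inv hx.ne').sub_const 1).fun_pow 2).const_mul (2:ℝ)
    refine this.congr_deriv ?_; norm_num
  have h3 : HasDerivAt (fun a : ℝ => 6*(a⁻¹ - 1 + Real.log a)) (6*(-(x^2)⁻¹ + x⁻¹)) x := by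
    exact (((hasDerivAt_inv hx.ne').sub_const 1).add (Real.hasDerivAt_log hx.ne')).const_mul 6
  have := (h1.add h2).sub h3
  refine HasDerivAt.congr_deriv (f := hfun) this ?_
  field_simp
  ring

lemma hfun_nonneg {a : ℝ} (ha : 0 < a) : 0 ≤ hfun a := by
  have h1 : hfun 1 = 0 := by simp [hfun]
  rcases le_total 1 a with h | h
  · have hmono : MonotoneOn hfun (Set.Ici 1) := by
      apply monotoneOn_of_deriv_nonneg (convex_Ici 1)
      · intro x hx
        exact (hfun_hasDerivAt (lt_of_lt_of_le one_pos hx)).continuousAt.continuousWithinAt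
      · intro x hx
        rw [interior_Ici] at hx
        exact ((hfun_hasDerivAt (lt_trans one_pos hx)).differentiableAt).differentiableWithinAt
      · intro x hx
        rw [interior_Ici] at hx
        have hx1 : (1:ℝ) < x := hx
        have hx0 : (0:ℝ) < x := lt_trans one_pos hx1
        rw [(hfun_hasDerivAt hx0).deriv]
        have h3 : (0:ℝ) ≤ (x-1)^3 := pow_nonneg (by linarith) 3
        have h1 : (0:ℝ) ≤ 2*(x-1)^3*(x+2) :=
          mul_nonneg (mul_nonneg (by norm_num) h3) (by linarith)
        positivity
    calc (0:ℝ) = hfun 1 := h1.symm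
      _ ≤ hfun a := hmono Set.self_mem_Ici h h
  · have hanti : AntitoneOn hfun (Set.Icc a 1) := by
      apply antitoneOn_of_deriv_nonpos (convex_Icc a 1)
      · intro x hx
        have hx0 : 0 < x := lt_of_lt_of_le ha hx.1
        exact (hfun_hasDerivAt hx0).continuousAt.continuousWithinAt
      · intro x hx
        rw [interior_Icc] at hx
        have hx0 : 0 < x := lt_trans ha hx.1
        exact ((hfun_hasDerivAt hx0).differentiableAt).differentiableWithinAt
      · intro x hx
        rw [interior_Icc] at hx
        have hx0 : 0 < x := lt_trans ha hx.1
        rw [(hfun_hasDerivAt hx0).deriv]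
        have hle : x - 1 ≤ 0 := by linarith [hx.2]
        have h3 : (x-1)^3 ≤ 0 := Odd.pow_nonpos (by decide) hle
        have hnum : 2*(x-1)^3*(x+2) ≤ 0 := by nlinarith
        exact div_nonpos_of_nonpos_of_nonneg hnum (by positivity)
    calc (0:ℝ) = hfun 1 := h1.symm
      _ ≤ hfun a := hanti ⟨le_refl a, h⟩ ⟨h, le_refl 1⟩ h

lemma scalar_ineq {a : ℝ} (ha : 0 < a) :
    6 * (a⁻¹ - 1 + Real.log a) ≤ (a - 1)^2 + 2*(a⁻¹ - 1)^2 := by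
  have := hfun_nonneg ha
  unfold hfun at this
  linarith

lemma spectral_ineq {B : Mat d} (hB : B.PosDef) :
    6 * (B⁻¹.trace - d + Real.log B.det)
      ≤ ((B - 1) * (B - 1)).trace + 2 * ((B⁻¹ - 1) * (B⁻¹ - 1)).trace := by
  classical
  have hH : B.IsHermitian := hB.isHermitian
  set U : Mat d := (hH.eigenvectorUnitary : Mat d) with hUdef
  set lam : Fin d → ℝ := hH.eigenvalues with hlamdef
  have hlampos : ∀ i, 0 < lam i := hB.eigenvalues_pos
  have hU1 : U * star U = 1 := Matrix.mem_unitaryGroup_iff.mp hH.eigenvectorUnitary.2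
  have h1U : star U * U = 1 := Matrix.mem_unitaryGroup_iff'.mp hH.eigenvectorUnitary.2
  set conj : (Fin d → ℝ) → Mat d := fun f => U * diagonal f * star U with hconjdef
  have hconj_mul : ∀ f g, conj f * conj g = conj (f * g) := by
    intro f g
    simp only [hconjdef]
    calc U * diagonal f * star U * (U * diagonal g * star U)
        = U * diagonal f * (star U * U) * diagonal g * star U := by
          simp only [Matrix.mul_assoc]
      _ = U * (diagonal f * diagonal g) * star U := by
          rw [h1U]; simp only [Matrix.mul_assoc, Matrix.one_mul]
      _ = conj (f * g) := by rw [diagonal_mul_diagonal]; rfl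
  have hconj_sub : ∀ f g, conj f - conj g = conj (f - g) := by
    intro f g
    simp only [hconjdef]
    rw [show diagonal (f - g) = diagonal f - diagonal g by rw [diagonal_sub]; rfl,
      Matrix.mul_sub, Matrix.sub_mul]
  have htrace : ∀ f, (conj f).trace = ∑ i, f i := by
    intro f
    simp only [hconjdef]
    rw [trace_mul_cycle, h1U, Matrix.one_mul, trace_diagonal]
  have hB_eq : B = conj lam := by
    have := hH.spectral_theorem
    simpa [hconjdef] using this
  have hone : (1 : Mat d) = conj 1 := by
    simp only [hconjdef]
    rw [show diagonal (1 : Fin d → ℝ) = (1 : Mat d) from diagonal_one, Matrix.mul_one, hU1]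
  have hBinv : B⁻¹ = conj (fun i => (lam i)⁻¹) := by
    apply Matrix.inv_eq_right_inv
    rw [hB_eq, hconj_mul]
    have hfg : (lam * fun i => (lam i)⁻¹) = 1 := by
      funext i
      simp [mul_inv_cancel₀ (hlampos i).ne']
    rw [hfg, ← hone]
  have hBm1 : B - 1 = conj (fun i => lam i - 1) := by
    rw [hB_eq, hone, hconj_sub]; rfl
  have hBim1 : B⁻¹ - 1 = conj (fun i => (lam i)⁻¹ - 1) := by
    rw [hBinv, hone, hconj_sub]; rfl
  have ht1 : ((B - 1) * (B - 1)).trace = ∑ i, (lam i - 1)^2 := by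
    rw [hBm1, hconj_mul, htrace]
    congr 1; funext i; simp [Pi.mul_apply]; ring
  have ht2 : ((B⁻¹ - 1) * (B⁻¹ - 1)).trace = ∑ i, ((lam i)⁻¹ - 1)^2 := by
    rw [hBim1, hconj_mul, htrace]
    congr 1; funext i; simp [Pi.mul_apply]; ring
  have ht3 : B⁻¹.trace = ∑ i, (lam i)⁻¹ := by rw [hBinv, htrace]
  have ht4 : Real.log B.det = ∑ i, Real.log (lam i) := by
    rw [hH.det_eq_prod_eigenvalues]
    simp only [RCLike.ofReal_real_eq_id, id]
    rw [Real.log_prod (fun i _ => (hlampos i).ne')]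
  have hd : (d : ℝ) = ∑ _i : Fin d, (1:ℝ) := by simp
  have hsum : ∑ i, 6 * ((lam i)⁻¹ - 1 + Real.log (lam i))
      ≤ ∑ i, ((lam i - 1)^2 + 2*((lam i)⁻¹ - 1)^2) :=
    Finset.sum_le_sum (fun i _ => scalar_ineq (hlampos i))
  rw [ht1, ht2, ht3, ht4, hd]
  simp only [mul_add, mul_sub, Finset.sum_add_distrib, Finset.sum_sub_distrib,
    Finset.mul_sum] at hsum ⊢
  linarith

lemma psd_trace_nonneg {P : Mat d} (hP : P.PosSemidef) : 0 ≤ P.trace := by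
  exact hP.trace_nonneg

lemma msqrt_eq {A : Mat d} (hA : A.PosSemidef) : msqrt A =
    (hA.1.eigenvectorUnitary : Mat d) * diagonal ((↑) ∘ (Real.sqrt ∘ hA.1.eigenvalues)) *
      (star hA.1.eigenvectorUnitary : Mat d) := dif_pos hA

lemma msqrt_psd {A : Mat d} (hA : A.PosSemidef) : (msqrt A).PosSemidef := by
  rw [msqrt_eq hA]
  have hD : (diagonal ((↑) ∘ (Real.sqrt ∘ hA.1.eigenvalues)) : Mat d).PosSemidef :=
    PosSemidef.diagonal (fun i => by simp [Real.sqrt_nonneg])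
  exact hD.mul_mul_conjTranspose_same _

lemma msqrt_mul_self {A : Mat d} (hA : A.PosSemidef) : msqrt A * msqrt A = A := by
  have hU : star (hA.1.eigenvectorUnitary : Mat d) * (hA.1.eigenvectorUnitary : Mat d) = 1 :=
    Matrix.mem_unitaryGroup_iff'.mp hA.1.eigenvectorUnitary.2
  conv_rhs => rw [hA.1.spectral_theorem]
  rw [msqrt_eq hA, Unitary.conjStarAlgAut_apply]
  simp only [Matrix.mul_assoc]
  rw [← Matrix.mul_assoc _ (hA.1.eigenvectorUnitary : Mat d), hU, Matrix.one_mul,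
    ← Matrix.mul_assoc (diagonal _) (diagonal _), diagonal_mul_diagonal]
  congr 3
  funext i
  simp [Real.mul_self_sqrt (hA.eigenvalues_nonneg i)]

lemma psd_trace_mul_nonneg {P Q : Mat d} (hP : P.PosSemidef) (hQ : Q.PosSemidef) :
    0 ≤ (P * Q).trace := by
  have hs := msqrt_psd hQ
  have h1 : P * Q = P * msqrt Q * msqrt Q := by
    rw [Matrix.mul_assoc, msqrt_mul_self hQ]
  have h2 : (P * msqrt Q * msqrt Q).trace = (msqrt Q * P * msqrt Q).trace := by
    rw [trace_mul_cycle]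
  rw [h1, h2]
  have h3 : (msqrt Q * P * msqrt Q).PosSemidef := by
    have := hP.conjTranspose_mul_mul_same (msqrt Q)
    rwa [hs.isHermitian.eq] at this
  exact psd_trace_nonneg h3

lemma loewner_trace_mono {P A B : Mat d} (hP : P.PosSemidef) (h : Loewner A B) :
    (A * P).trace ≤ (B * P).trace := by
  have := psd_trace_mul_nonneg h hP
  rw [Matrix.sub_mul, trace_sub] at this
  linarith

lemma msqrt_posDef {A : Mat d} (hA : A.PosDef) : (msqrt A).PosDef := by
  have hpsd := msqrt_psd hA.posSemidef
  refine posDef_iff_dotProduct_mulVec.mpr ⟨hpsd.1, fun x hx => ?_⟩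
  rcases lt_or_eq_of_le (hpsd.dotProduct_mulVec_nonneg x) with h | h
  · exact h
  · exfalso
    have h0 : msqrt A *ᵥ x = 0 := (hpsd.dotProduct_mulVec_zero_iff x).mp h.symm
    have hAx : A *ᵥ x = 0 := by
      rw [← msqrt_mul_self hA.posSemidef, ← Matrix.mulVec_mulVec, h0, Matrix.mulVec_zero]
    have := hA.dotProduct_mulVec_pos hx
    rw [hAx, dotProduct_zero] at this
    exact lt_irrefl 0 this

lemma posDef_conj {A B : Mat d} (hA : A.PosDef) (hB : B.PosDef) : (B * A * B).PosDef := by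
  have hBH : Bᴴ = B := hB.isHermitian
  have hBinv : B⁻¹ * B = 1 := Matrix.nonsing_inv_mul B (isUnit_iff_ne_zero.mpr hB.det_pos.ne')
  refine posDef_iff_dotProduct_mulVec.mpr ⟨?_, fun x hx => ?_⟩
  · have := isHermitian_conjTranspose_mul_mul B hA.1
    rwa [hBH] at this
  · have hBx : B *ᵥ x ≠ 0 := by
      intro h
      apply hx
      have : B⁻¹ *ᵥ (B *ᵥ x) = x := by
        rw [Matrix.mulVec_mulVec, hBinv, Matrix.one_mulVec]
      rw [h, Matrix.mulVec_zero] at this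
      exact this.symm
    have h0 : 0 < star x ⬝ᵥ (Bᴴ * A * B) *ᵥ x := by
      simpa only [star_mulVec, dotProduct_mulVec, Matrix.vecMul_vecMul]
        using hA.dotProduct_mulVec_pos hBx
    rwa [hBH] at h0

lemma inner_toEuclideanLin_le {β : ℝ} {S : Mat d} (h : Loewner S (β • (1 : Mat d)))
    (x : E d) : ⟪x, S.toEuclideanLin x⟫ ≤ β * ‖x‖^2 := by
  set x' : Fin d → ℝ := WithLp.equiv 2 _ x with hx'
  have h2 := h.dotProduct_mulVec_nonneg x'
  have hsx : star x' = x' := star_trivial x'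
  have he1 : ⟪x, S.toEuclideanLin x⟫ = x' ⬝ᵥ (S *ᵥ x') := by
    rw [EuclideanSpace.inner_eq_star_dotProduct, star_trivial, dotProduct_comm]
    congr 1
  have he2 : ‖x‖^2 = x' ⬝ᵥ x' := by
    rw [← real_inner_self_eq_norm_sq, EuclideanSpace.inner_eq_star_dotProduct, star_trivial]
    rfl
  rw [he1, he2]
  rw [Matrix.sub_mulVec, dotProduct_sub, hsx, Matrix.smul_mulVec,
    Matrix.one_mulVec, dotProduct_smul] at h2
  simp only [smul_eq_mul] at h2
  linarith

end AuxProof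

set_option maxHeartbeats 1000000 in
/-- if `Σ₀⁻¹ ⪯ βI` and `Σ₁⁻¹ ⪯ βI`, then `KL(μ₀ ‖ μ₁) ≤ β W₂²(μ₀, μ₁)`. -/
theorem statement19 (d : ℕ) (β : ℝ) (hβ : 0 < β) (m0 m1 : E d) (S0 S1 : Mat d)
    (h0 : S0.PosDef) (h1 : S1.PosDef)
    (hb0 : Loewner S0⁻¹ (β • (1 : Mat d))) (hb1 : Loewner S1⁻¹ (β • (1 : Mat d))) :
    (1 / 2 : ℝ) * ((S1⁻¹ * S0).trace - d + ⟪m1 - m0, (S1⁻¹).toEuclideanLin (m1 - m0)⟫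
        + Real.log (S1.det / S0.det))
      ≤ β * W2sq m0 m1 S0 S1 := by
  classical
  unfold W2sq
  set R : Mat d := msqrt S0 with hRdef
  have hR : R.PosDef := msqrt_posDef h0
  have hRR : R * R = S0 := msqrt_mul_self h0.posSemidef
  have hRiR : R⁻¹ * R = 1 := Matrix.nonsing_inv_mul R (isUnit_iff_ne_zero.mpr hR.det_pos.ne')
  have hRRi : R * R⁻¹ = 1 := Matrix.mul_nonsing_inv R (isUnit_iff_ne_zero.mpr hR.det_pos.ne')
  have hC : (R * S1 * R).PosDef := posDef_conj h1 hR
  set M : Mat d := msqrt (R * S1 * R) with hMdef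
  have hM : M.PosDef := msqrt_posDef hC
  have hMM : M * M = R * S1 * R := msqrt_mul_self hC.posSemidef
  have hMiM : M⁻¹ * M = 1 := Matrix.nonsing_inv_mul M (isUnit_iff_ne_zero.mpr hM.det_pos.ne')
  have hMMi : M * M⁻¹ = 1 := Matrix.mul_nonsing_inv M (isUnit_iff_ne_zero.mpr hM.det_pos.ne')
  have hS1iS : S1⁻¹ * S1 = 1 := Matrix.nonsing_inv_mul S1 (isUnit_iff_ne_zero.mpr h1.det_pos.ne')
  have hS1Si : S1 * S1⁻¹ = 1 := Matrix.mul_nonsing_inv S1 (isUnit_iff_ne_zero.mpr h1.det_pos.ne')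
  set A : Mat d := R⁻¹ * M * R⁻¹ with hAdef
  clear_value R M
  have hA : A.PosDef := posDef_conj hM hR.inv
  have hAiA : A⁻¹ * A = 1 := Matrix.nonsing_inv_mul A (isUnit_iff_ne_zero.mpr hA.det_pos.ne')
  have hAAi : A * A⁻¹ = 1 := Matrix.mul_nonsing_inv A (isUnit_iff_ne_zero.mpr hA.det_pos.ne')
  have cR1 : ∀ X : Mat d, R⁻¹ * (R * X) = X := fun X => by
    rw [← Matrix.mul_assoc, hRiR, Matrix.one_mul]
  have cR2 : ∀ X : Mat d, R * (R⁻¹ * X) = X := fun X => by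
    rw [← Matrix.mul_assoc, hRRi, Matrix.one_mul]
  have cM1 : ∀ X : Mat d, M⁻¹ * (M * X) = X := fun X => by
    rw [← Matrix.mul_assoc, hMiM, Matrix.one_mul]
  have cM2 : ∀ X : Mat d, M * (M⁻¹ * X) = X := fun X => by
    rw [← Matrix.mul_assoc, hMMi, Matrix.one_mul]
  have cA1 : ∀ X : Mat d, A⁻¹ * (A * X) = X := fun X => by
    rw [← Matrix.mul_assoc, hAiA, Matrix.one_mul]
  have cA2 : ∀ X : Mat d, A * (A⁻¹ * X) = X := fun X => by
    rw [← Matrix.mul_assoc, hAAi, Matrix.one_mul]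
  have hMM' : ∀ X : Mat d, M * (M * X) = R * (S1 * (R * X)) := fun X => by
    rw [← Matrix.mul_assoc, hMM]; simp only [Matrix.mul_assoc]
  have hS1A : A * S0 * A = S1 := by
    rw [hAdef, ← hRR]
    simp only [Matrix.mul_assoc, cR1, cR2, hMM', hRRi, hRiR, Matrix.mul_one, Matrix.one_mul]
  have hAinv : A⁻¹ = R * M⁻¹ * R := by
    apply Matrix.inv_eq_right_inv
    rw [hAdef]
    simp only [Matrix.mul_assoc, cR1, cR2, cM1, cM2, hRiR, hRRi, Matrix.mul_one]
  have hS0Ai : A⁻¹ * S1 * A⁻¹ = S0 := by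
    rw [← hS1A]
    simp only [Matrix.mul_assoc, cA1, cA2, hAAi, Matrix.mul_one]
  -- trace identities
  have htrAS0 : (A * S0).trace = M.trace := by
    have e : A * S0 = R⁻¹ * (M * R) := by
      rw [hAdef, ← hRR]
      simp only [Matrix.mul_assoc, cR1, cR2]
    rw [e, trace_mul_comm, Matrix.mul_assoc, hRRi, Matrix.mul_one]
  have htrAiS1 : (A⁻¹ * S1).trace = M.trace := by
    have hS1eq : S1 = R⁻¹ * (M * (M * R⁻¹)) := by
      have := hMM' (R⁻¹)
      rw [this]
      simp only [Matrix.mul_assoc, cR1, cR2, hRRi, Matrix.mul_one]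
    have e : A⁻¹ * S1 = R * (M * R⁻¹) := by
      rw [hAinv, hS1eq]
      simp only [Matrix.mul_assoc, cR1, cR2, cM1, cM2]
    rw [e, trace_mul_comm, Matrix.mul_assoc, hRiR, Matrix.mul_one]
  -- the transport cost matrices
  set Q : Mat d := (A⁻¹ - 1) * S1 * (A⁻¹ - 1) with hQdef
  set P : Mat d := (A - 1) * S0 * (A - 1) with hPdef
  clear_value A
  have hQexp : Q = A⁻¹ * S1 * A⁻¹ - A⁻¹ * S1 - (S1 * A⁻¹ - S1) := by
    rw [hQdef]; noncomm_ring
  have hPexp : P = A * S0 * A - A * S0 - (S0 * A - S0) := by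
    rw [hPdef]; noncomm_ring
  have htrQ : Q.trace = S0.trace + S1.trace - 2 * M.trace := by
    rw [hQexp, trace_sub, trace_sub, trace_sub, hS0Ai, htrAiS1, trace_mul_comm S1 A⁻¹, htrAiS1]
    ring
  have htrP : P.trace = S0.trace + S1.trace - 2 * M.trace := by
    rw [hPexp, trace_sub, trace_sub, trace_sub, hS1A, htrAS0, trace_mul_comm S0 A, htrAS0]
    ring
  have hAm1H : (A - (1:Mat d)).IsHermitian := hA.1.sub (isHermitian_one)
  have hAim1H : (A⁻¹ - (1:Mat d)).IsHermitian := hA.inv.1.sub (isHermitian_one)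
  have hQpsd : Q.PosSemidef := by
    have := h1.posSemidef.conjTranspose_mul_mul_same (A⁻¹ - 1)
    rwa [hAim1H.eq] at this
  have i6 : 0 ≤ Q.trace := psd_trace_nonneg hQpsd
  have htrSQ : (S1⁻¹ * Q).trace = (S1⁻¹ * S0).trace - 2 * A⁻¹.trace + d := by
    have e1 : S1⁻¹ * (A⁻¹ * S1 * A⁻¹) = S1⁻¹ * S0 := by rw [hS0Ai]
    have e2 : (S1⁻¹ * (A⁻¹ * S1)).trace = A⁻¹.trace := by
      rw [trace_mul_comm, Matrix.mul_assoc, hS1Si, Matrix.mul_one]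
    have e3 : (S1⁻¹ * (S1 * A⁻¹)).trace = A⁻¹.trace := by
      rw [← Matrix.mul_assoc, hS1iS, Matrix.one_mul]
    have e4 : (S1⁻¹ * S1).trace = (d:ℝ) := by
      rw [hS1iS, trace_one]; simp
    rw [hQexp, Matrix.mul_sub, Matrix.mul_sub, Matrix.mul_sub, trace_sub, trace_sub,
      trace_sub, e1, e2, e3, e4]
    ring
  have i1 : (S1⁻¹ * Q).trace ≤ β * Q.trace := by
    have := loewner_trace_mono hQpsd hb1
    rwa [Matrix.smul_mul, Matrix.one_mul, trace_smul, smul_eq_mul] at this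
  -- Loewner bounds transported to S0, S1
  have hS0inv : S0⁻¹ = R⁻¹ * R⁻¹ := by rw [← hRR, Matrix.mul_inv_rev]
  have hb0' : ((β • S0 : Mat d) - 1).PosSemidef := by
    have hb0'' : ((β • (1:Mat d)) - S0⁻¹).PosSemidef := hb0
    have hcong := hb0''.conjTranspose_mul_mul_same R
    rw [hR.1.eq] at hcong
    have e : R * ((β • (1:Mat d)) - S0⁻¹) * R = β • S0 - 1 := by
      rw [Matrix.mul_sub, Matrix.sub_mul]
      congr 1
      · rw [Matrix.mul_smul, Matrix.mul_one, Matrix.smul_mul, hRR]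
      · rw [hS0inv]
        simp only [Matrix.mul_assoc, cR2, hRiR]
    rwa [e] at hcong
  have hb1' : ((β • S1 : Mat d) - 1).PosSemidef := by
    set T : Mat d := msqrt S1 with hTdef
    have hT : T.PosDef := msqrt_posDef h1
    have hTT : T * T = S1 := msqrt_mul_self h1.posSemidef
    have hTiT : T⁻¹ * T = 1 := Matrix.nonsing_inv_mul T (isUnit_iff_ne_zero.mpr hT.det_pos.ne')
    have cT2 : ∀ X : Mat d, T * (T⁻¹ * X) = X := fun X => by
      rw [← Matrix.mul_assoc, Matrix.mul_nonsing_inv T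
        (isUnit_iff_ne_zero.mpr hT.det_pos.ne'), Matrix.one_mul]
    have hS1inv : S1⁻¹ = T⁻¹ * T⁻¹ := by rw [← hTT, Matrix.mul_inv_rev]
    have hb1'' : ((β • (1:Mat d)) - S1⁻¹).PosSemidef := hb1
    have hcong := hb1''.conjTranspose_mul_mul_same T
    rw [hT.1.eq] at hcong
    have e : T * ((β • (1:Mat d)) - S1⁻¹) * T = β • S1 - 1 := by
      rw [Matrix.mul_sub, Matrix.sub_mul]
      congr 1
      · rw [Matrix.mul_smul, Matrix.mul_one, Matrix.smul_mul, hTT]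
      · rw [hS1inv]
        simp only [Matrix.mul_assoc, cT2, hTiT]
    rwa [e] at hcong
  have i2 : ((A - 1) * (A - 1)).trace ≤ β * Q.trace := by
    have hcong2 : ((A - 1) * (β • S0 - 1) * (A - 1)).PosSemidef := by
      have := hb0'.conjTranspose_mul_mul_same (A - 1)
      rwa [hAm1H.eq] at this
    have hnn := psd_trace_nonneg hcong2
    have e : (A - 1) * ((β • S0 : Mat d) - 1) * (A - 1)
        = β • ((A - 1) * S0 * (A - 1)) - (A - 1) * (A - 1) := by
      rw [Matrix.mul_sub (A - 1) (β • S0) 1,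
        Matrix.sub_mul ((A - 1) * (β • S0)) ((A - 1) * 1) (A - 1),
        Matrix.mul_one, Matrix.mul_smul, Matrix.smul_mul]
    have hPQ : trace P = trace Q := by rw [htrP, htrQ]
    rw [e, trace_sub, trace_smul, smul_eq_mul, ← hPdef, hPQ] at hnn
    linarith
  have i3 : ((A⁻¹ - 1) * (A⁻¹ - 1)).trace ≤ β * Q.trace := by
    have hcong3 : ((A⁻¹ - 1) * (β • S1 - 1) * (A⁻¹ - 1)).PosSemidef := by
      have := hb1'.conjTranspose_mul_mul_same (A⁻¹ - 1)
      rwa [hAim1H.eq] at this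
    have hnn := psd_trace_nonneg hcong3
    have e : (A⁻¹ - 1) * ((β • S1 : Mat d) - 1) * (A⁻¹ - 1)
        = β • ((A⁻¹ - 1) * S1 * (A⁻¹ - 1)) - (A⁻¹ - 1) * (A⁻¹ - 1) := by
      rw [Matrix.mul_sub (A⁻¹ - 1) (β • S1) 1,
        Matrix.sub_mul ((A⁻¹ - 1) * (β • S1)) ((A⁻¹ - 1) * 1) (A⁻¹ - 1),
        Matrix.mul_one, Matrix.mul_smul, Matrix.smul_mul]
    rw [e, trace_sub, trace_smul, smul_eq_mul, ← hQdef] at hnn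
    linarith
  have i4 := spectral_ineq hA
  have i5 : ⟪m1 - m0, (S1⁻¹).toEuclideanLin (m1 - m0)⟫ ≤ β * ‖m1 - m0‖^2 :=
    inner_toEuclideanLin_le hb1 (m1 - m0)
  have hdet : Real.log (S1.det / S0.det) = 2 * Real.log A.det := by
    have e : S1.det / S0.det = A.det ^ 2 := by
      rw [← hS1A, Matrix.det_mul, Matrix.det_mul]
      field_simp [h0.det_pos.ne']
    rw [e, Real.log_pow]
    norm_num
  have hW2trace : (S0 + S1 - (2:ℝ) • M).trace = Q.trace := by
    rw [trace_sub, trace_add, trace_smul, htrQ, smul_eq_mul]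
  have hnormeq : ‖m0 - m1‖ = ‖m1 - m0‖ := norm_sub_rev _ _
  have hβn : 0 ≤ β * ‖m1 - m0‖^2 := by positivity
  rw [hW2trace, hdet, hnormeq]
  linarith


end
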